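/- The binary-concrete sample is a valid relaxation: if U ~ Uniform(0,1), α ∈ ℝ, τ > 0, and s = σ((log U − log(1−U) + α)/τ) where σ is the sigmoid function, then s ∈ (0,1) almost surely, and as τ → 0⁺ the random variable s converges in distribution to a Bernoulli random variable with success probability σ(α), i.e., P(s > 1/2) = σ(α) for every τ > 0 and lim_{τ→0} P(s > t) = σ(α) for every t ∈ (0,1). -/

import Mathlib

open MeasureTheory

noncomputable def sigmoid (x : ℝ) : ℝ := 1 / (1 + Real.exp (-x))

noncomputable def logit (y : ℝ) : ℝ := Real.log y - Real.log (1 - y)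

lemma sigmoid_mem (x : ℝ) : sigmoid x ∈ Set.Ioo (0 : ℝ) 1 := by
  unfold sigmoid
  constructor
  · positivity
  · rw [div_lt_one (by positivity)]
    have := Real.exp_pos (-x); linarith

lemma sigmoid_strictMono : StrictMono sigmoid := by
  intro x y h
  unfold sigmoid
  have : Real.exp (-y) < Real.exp (-x) := Real.exp_lt_exp.mpr (by linarith)
  exact one_div_lt_one_div_of_lt (by positivity) (by linarith)

lemma one_sub_sigmoid (x : ℝ) : 1 - sigmoid x = sigmoid (-x) := by
  have h := Real.exp_ne_zero x
  simp only [sigmoid, neg_neg]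
  rw [Real.exp_neg]
  have h1 : (1:ℝ) + (Real.exp x)⁻¹ ≠ 0 := by positivity
  have h2 : (1:ℝ) + Real.exp x ≠ 0 := by positivity
  field_simp
  ring

lemma logit_sigmoid (x : ℝ) : logit (sigmoid x) = x := by
  have h0 : (0:ℝ) < sigmoid x := (sigmoid_mem x).1
  have h1 : 1 - sigmoid x = Real.exp (-x) * sigmoid x := by
    unfold sigmoid
    have : (1:ℝ) + Real.exp (-x) ≠ 0 := by positivity
    field_simp
    ring
  unfold logit
  rw [h1, Real.log_mul (Real.exp_ne_zero _) (ne_of_gt h0), Real.log_exp]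
  ring

lemma sigmoid_logit {y : ℝ} (hy : y ∈ Set.Ioo (0:ℝ) 1) : sigmoid (logit y) = y := by
  have h1 : (0:ℝ) < y := hy.1
  have h2 : (0:ℝ) < 1 - y := by linarith [hy.2]
  unfold sigmoid logit
  rw [neg_sub, Real.exp_sub, Real.exp_log h2, Real.exp_log h1]
  have h3 : 1 + (1 - y) / y = 1 / y := by field_simp; ring
  rw [h3, one_div_one_div]

lemma logit_strictMonoOn : StrictMonoOn logit (Set.Ioo (0:ℝ) 1) := by
  intro a ha b hb h
  unfold logit
  have h1 := Real.log_lt_log ha.1 h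
  have h2 := Real.log_lt_log (by linarith [hb.2] : (0:ℝ) < 1 - b) (by linarith : 1 - b < 1 - a)
  linarith

lemma sigmoid_continuous : Continuous sigmoid := by
  have h : ∀ x : ℝ, (1:ℝ) + Real.exp (-x) ≠ 0 := fun x => by positivity
  unfold sigmoid
  simp only [one_div]
  exact (continuous_const.add (Real.continuous_exp.comp continuous_neg)).inv₀ h

lemma key (α τ t : ℝ) (hτ : 0 < τ) (ht : t ∈ Set.Ioo (0:ℝ) 1) :
    ((volume.restrict (Set.Ioo (0:ℝ) 1))
        {u | t < sigmoid ((Real.log u - Real.log (1-u) + α)/τ)}).toReal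
      = sigmoid (α - τ * logit t) := by
  set c := sigmoid (τ * logit t - α) with hc
  have hcm := sigmoid_mem (τ * logit t - α)
  have main : ∀ u ∈ Set.Ioo (0:ℝ) 1,
      (t < sigmoid ((Real.log u - Real.log (1-u) + α)/τ) ↔ c < u) := by
    intro u hu
    have hL : Real.log u - Real.log (1-u) = logit u := rfl
    rw [hL]
    calc t < sigmoid ((logit u + α)/τ)
        ↔ sigmoid (logit t) < sigmoid ((logit u + α)/τ) := by rw [sigmoid_logit ht]
      _ ↔ logit t < (logit u + α)/τ := sigmoid_strictMono.lt_iff_lt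
      _ ↔ logit c < logit u := by
            rw [hc, logit_sigmoid, lt_div_iff₀ hτ]
            constructor <;> intro <;> linarith
      _ ↔ c < u := logit_strictMonoOn.lt_iff_lt hcm hu
  have hset : {u | t < sigmoid ((Real.log u - Real.log (1-u) + α)/τ)} ∩ Set.Ioo (0:ℝ) 1
      = Set.Ioo c 1 := by
    ext u
    simp only [Set.mem_inter_iff, Set.mem_setOf_eq, Set.mem_Ioo]
    constructor
    · rintro ⟨h1, h2, h3⟩
      exact ⟨(main u ⟨h2, h3⟩).mp h1, h3⟩
    · rintro ⟨h1, h2⟩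
      have hu0 : 0 < u := lt_trans hcm.1 h1
      exact ⟨(main u ⟨hu0, h2⟩).mpr h1, hu0, h2⟩
  rw [Measure.restrict_apply' measurableSet_Ioo, hset, Real.volume_Ioo,
    ENNReal.toReal_ofReal (by linarith [hcm.2])]
  rw [hc, one_sub_sigmoid]
  congr 1
  ring

/-- The binary-concrete sample s = σ((log U − log(1−U) + α)/τ) with
U ~ Uniform(0,1) lies in (0,1), satisfies P(s > 1/2) = σ(α) for every τ > 0, and
P(s > t) → σ(α) as τ → 0⁺ for every t ∈ (0,1). -/
theorem stmt13 (α : ℝ) :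
    let μ := volume.restrict (Set.Ioo (0 : ℝ) 1)
    let s : ℝ → ℝ → ℝ := fun τ u =>
      sigmoid ((Real.log u - Real.log (1 - u) + α) / τ)
    (∀ τ > (0 : ℝ), ∀ u ∈ Set.Ioo (0 : ℝ) 1, s τ u ∈ Set.Ioo (0 : ℝ) 1)
    ∧ (∀ τ > (0 : ℝ), (μ {u | 1 / 2 < s τ u}).toReal = sigmoid α)
    ∧ (∀ t ∈ Set.Ioo (0 : ℝ) 1,
        Filter.Tendsto (fun τ => (μ {u | t < s τ u}).toReal)
          (nhdsWithin 0 (Set.Ioi 0)) (nhds (sigmoid α))) := by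
  intro μ s
  refine ⟨fun τ _ u _ => sigmoid_mem _, ?_, ?_⟩
  · intro τ hτ
    have h := key α τ (1/2) hτ ⟨by norm_num, by norm_num⟩
    have hl : logit (1/2 : ℝ) = 0 := by norm_num [logit]
    rw [hl, mul_zero, sub_zero] at h
    exact h
  · intro t ht
    have htend : Filter.Tendsto (fun τ => sigmoid (α - τ * logit t))
        (nhdsWithin 0 (Set.Ioi 0)) (nhds (sigmoid α)) := by
      have hc : Continuous fun τ : ℝ => sigmoid (α - τ * logit t) :=
        sigmoid_continuous.comp (by continuity)
      have h0 := hc.tendsto 0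
      simp only [zero_mul, sub_zero] at h0
      exact h0.mono_left nhdsWithin_le_nhds
    refine Filter.Tendsto.congr' ?_ htend
    filter_upwards [self_mem_nhdsWithin] with τ hτ
    exact (key α τ t hτ ht).symm
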